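/- For every real x with 0 ≤ x ≤ π/6, cos x ≥ e^{−x²/2 − x⁴/2}. -/

import Mathlib

/-- for `0 ≤ x ≤ π/6`, `cos x ≥ e^{−x²/2 − x⁴/2}`. -/
theorem exp_le_cos_of_le_pi_div_six (x : ℝ) (h0 : 0 ≤ x) (h1 : x ≤ Real.pi / 6) :
    Real.exp (-(x ^ 2) / 2 - x ^ 4 / 2) ≤ Real.cos x := by
  have hx : x ≤ 0.53 := by
    have := Real.pi_lt_d2
    linarith
  set a : ℝ := x ^ 2 / 2 + x ^ 4 / 2 with ha
  have ha0 : 0 ≤ a := by positivity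
  have hx1 : |x| ≤ 1 := by rw [abs_of_nonneg h0]; linarith
  have hcb := Real.cos_bound hx1
  have hcos : 1 - x ^ 2 / 2 - 5 / 96 * x ^ 4 ≤ Real.cos x := by
    have := abs_le.mp hcb
    have h4 : |x| ^ 4 = x ^ 4 := by rw [abs_of_nonneg h0]
    rw [h4] at this
    linarith [this.1]
  have hexp : Real.exp (-(x ^ 2) / 2 - x ^ 4 / 2) ≤ 1 / (1 + a) := by
    have he : (1 : ℝ) + a ≤ Real.exp a := by linarith [Real.add_one_le_exp a]
    have hpos : 0 < 1 + a := by linarith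
    have : Real.exp (-(x ^ 2) / 2 - x ^ 4 / 2) = (Real.exp a)⁻¹ := by
      rw [← Real.exp_neg, ha]; ring_nf
    rw [this, one_div]
    exact inv_anti₀ hpos he
  have key : 1 / (1 + a) ≤ Real.cos x := by
    rw [div_le_iff₀ (by linarith)]
    have hsq : x ^ 2 ≤ 0.2809 := by nlinarith
    have hpoly : 1 ≤ (1 - x ^ 2 / 2 - 5 / 96 * x ^ 4) * (1 + a) := by
      rw [ha]
      nlinarith [pow_nonneg h0 4, pow_nonneg h0 8,
        mul_le_mul_of_nonneg_right hsq (pow_nonneg h0 4)]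
    have hm := mul_le_mul_of_nonneg_right hcos (by linarith : (0:ℝ) ≤ 1 + a)
    exact hpoly.trans hm
  linarith
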